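/- For integers n ≥ 2, let D_n be the graph consisting of a cycle on n + 1 vertices together with one additional pendant vertex attached by an edge to one vertex of the cycle (so D_n has n + 2 vertices). Then the sequence n ↦ λ₁(D_n) is strictly decreasing and converges to λ* := √(2+√5) as n → ∞. -/

import Mathlib

open scoped Classical

/-- The adjacency matrix (over `ℝ`) of a simple graph. -/
noncomputable def adjMat {V : Type*} [Fintype V] (G : SimpleGraph V) : Matrix V V ℝ :=
  fun i j => if G.Adj i j then 1 else 0

/-- The spectral radius of a finite simple graph: the largest eigenvalue of its
adjacency matrix. -/
noncomputable def specRad {V : Type*} [Fintype V] (G : SimpleGraph V) : ℝ :=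
  sSup {μ : ℝ | ∃ v : V → ℝ, v ≠ 0 ∧ (adjMat G).mulVec v = μ • v}

/-- `Contains G H` : the graph `H` contains a copy of `G` as a subgraph. -/
def Contains {V W : Type*} (G : SimpleGraph V) (H : SimpleGraph W) : Prop :=
  ∃ f : V → W, Function.Injective f ∧ ∀ ⦃a b⦄, G.Adj a b → H.Adj (f a) (f b)

/-- `beta m` : the unique positive real root of `x^(m+1) = 1 + x + ⋯ + x^(m-1)`. -/
noncomputable def beta (m : ℕ) : ℝ :=
  sSup {x : ℝ | 0 < x ∧ x ^ (m + 1) = ∑ i ∈ Finset.range m, x ^ i}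

/-- `alpha m = beta m ^ (1/2) + beta m ^ (-1/2)`. -/
noncomputable def alpha (m : ℕ) : ℝ :=
  Real.sqrt (beta m) + (Real.sqrt (beta m))⁻¹

/-- `λ* = √(2+√5)`. -/
noncomputable def lambdaStar : ℝ := Real.sqrt (2 + Real.sqrt 5)

/-- A spherical `L`-code in `ℝ^n`: a finite set of unit vectors whose pairwise
inner products lie in `L`. -/
def SphericalCode (n : ℕ) (L : Set ℝ) (C : Finset (EuclideanSpace ℝ (Fin n))) : Prop :=
  (∀ v ∈ C, ‖v‖ = 1) ∧
  ∀ v ∈ C, ∀ w ∈ C, v ≠ w → (inner ℝ v w : ℝ) ∈ L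

/-- `Nmax a n` : the maximum cardinality of a spherical `{-a, a}`-code in `ℝ^n`,
i.e. the maximum number of equiangular lines in `ℝ^n` with angle `arccos a`. -/
noncomputable def Nmax (a : ℝ) (n : ℕ) : ℕ :=
  sSup {k : ℕ | ∃ C : Finset (EuclideanSpace ℝ (Fin n)),
    SphericalCode n {-a, a} C ∧ C.card = k}

/-- The spectral radius order of `l` : the smallest number of vertices of a finite
simple graph whose spectral radius is `l`; `⊤` if there is no such graph. -/
noncomputable def specOrder (l : ℝ) : ℕ∞ :=
  sInf ((fun k : ℕ => (k : ℕ∞)) '' {k : ℕ | ∃ G : SimpleGraph (Fin k), specRad G = l})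

/-- The set `L(α, t)` from the paper. -/
noncomputable def Lset (a : ℝ) (t : ℕ) : Set ℝ :=
  { -(1 / ((1 - a) / (2 * a))) * (1 - 1 / ((t : ℝ) + a⁻¹)) + 1 / ((t : ℝ) + a⁻¹),
    1 / ((t : ℝ) + a⁻¹) }

/-- The underlying graph of a spherical code: vertices are the code vectors, two
of them adjacent iff their inner product is negative. -/
def codeGraph {n : ℕ} (C : Finset (EuclideanSpace ℝ (Fin n))) :
    SimpleGraph {v // v ∈ C} :=
  SimpleGraph.fromRel (fun v w =>
    (inner ℝ (v : EuclideanSpace ℝ (Fin n)) (w : EuclideanSpace ℝ (Fin n)) : ℝ) < 0)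

/-- `x` is a totally real algebraic integer: it is integral over `ℤ` and every
complex root of its minimal polynomial over `ℚ` is real. -/
def TotallyRealAlgInt (x : ℝ) : Prop :=
  IsIntegral ℤ x ∧ ∀ z : ℂ, Polynomial.aeval z (minpoly ℚ x) = 0 → z.im = 0

/-- The graph `D_n`: a cycle on the `n + 1` vertices `0, 1, …, n`, together with
an extra pendant vertex `n + 1` joined to the cycle vertex `0`. -/
def Dgraph (n : ℕ) : SimpleGraph (Fin (n + 2)) :=
  SimpleGraph.fromRel (fun a b =>
    (a.val + 1 = b.val ∧ b.val ≤ n) ∨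
    (a.val = 0 ∧ b.val = n) ∨
    (a.val = 0 ∧ b.val = n + 1))

lemma adjMat_nonneg {V : Type*} [Fintype V] (G : SimpleGraph V) (i j : V) :
    0 ≤ adjMat G i j := by
  unfold adjMat; split <;> norm_num

lemma adjMat_symm {V : Type*} [Fintype V] (G : SimpleGraph V) (i j : V) :
    adjMat G i j = adjMat G j i := by
  simp only [adjMat]; rw [G.adj_comm]

lemma specRad_eq_of_pos {V : Type*} [Fintype V] [Nonempty V] (G : SimpleGraph V)
    (l : ℝ) (v : V → ℝ) (hv : ∀ i, 0 < v i)
    (heig : (adjMat G).mulVec v = l • v) : specRad G = l := by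
  have hmv : ∀ j, ∑ i, adjMat G i j * v i = l * v j := by
    intro j
    have := congrFun heig j
    simp only [Matrix.mulVec, dotProduct, Pi.smul_apply, smul_eq_mul] at this
    rw [← this]
    exact Finset.sum_congr rfl (fun i _ => by rw [adjMat_symm])
  apply IsGreatest.csSup_eq
  constructor
  · exact ⟨v, fun h => absurd (congrFun h (Classical.arbitrary V)) (by simpa using (hv _).ne'), heig⟩
  · rintro μ ⟨w, hw0, hww⟩
    set S := ∑ i, |w i| * v i with hSdef
    have hS : 0 < S := by
      obtain ⟨i0, hi0⟩ := Function.ne_iff.1 hw0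
      refine Finset.sum_pos' (fun i _ => mul_nonneg (abs_nonneg _) (hv i).le) ⟨i0, Finset.mem_univ _, ?_⟩
      have : 0 < |w i0| := abs_pos.2 hi0
      exact mul_pos this (hv i0)
    have step1 : ∀ i, |μ| * |w i| ≤ ∑ j, adjMat G i j * |w j| := by
      intro i
      have h1 : (adjMat G).mulVec w i = μ * w i := by
        rw [hww]; simp
      have h2 : |μ * w i| = |∑ j, adjMat G i j * w j| := by
        rw [← h1]; rfl
      rw [abs_mul] at h2
      rw [h2]
      calc |∑ j, adjMat G i j * w j| ≤ ∑ j, |adjMat G i j * w j| := Finset.abs_sum_le_sum_abs _ _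
        _ = ∑ j, adjMat G i j * |w j| := Finset.sum_congr rfl (fun j _ => by
            rw [abs_mul, abs_of_nonneg (adjMat_nonneg G i j)])
    have step2 : |μ| * S ≤ l * S := by
      calc |μ| * S = ∑ i, (|μ| * |w i|) * v i := by rw [hSdef, Finset.mul_sum]; exact Finset.sum_congr rfl (fun i _ => by ring)
        _ ≤ ∑ i, (∑ j, adjMat G i j * |w j|) * v i :=
            Finset.sum_le_sum (fun i _ => mul_le_mul_of_nonneg_right (step1 i) (hv i).le)
        _ = ∑ j, |w j| * (∑ i, adjMat G i j * v i) := by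
            have : ∀ i, (∑ j, adjMat G i j * |w j|) * v i = ∑ j, adjMat G i j * |w j| * v i := fun i => Finset.sum_mul _ _ _
            simp only [this, Finset.mul_sum]
            rw [Finset.sum_comm]
            exact Finset.sum_congr rfl (fun j _ => Finset.sum_congr rfl (fun i _ => by ring))
        _ = ∑ j, |w j| * (l * v j) := Finset.sum_congr rfl (fun j _ => by rw [hmv j])
        _ = l * S := by rw [hSdef, Finset.mul_sum]; exact Finset.sum_congr rfl (fun j _ => by ring)
    have : |μ| ≤ l := le_of_mul_le_mul_right (by simpa [mul_comm] using step2) hS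
    exact (le_abs_self μ).trans this

noncomputable def tstar : ℝ := Real.sqrt ((1 + Real.sqrt 5)/2)

lemma s5_sq : (Real.sqrt 5)^2 = 5 := Real.sq_sqrt (by norm_num)
lemma s5_gt : 2 < Real.sqrt 5 := by nlinarith [s5_sq, Real.sqrt_nonneg 5]
lemma s5_lt : Real.sqrt 5 < 3 := by nlinarith [s5_sq, Real.sqrt_nonneg 5]

lemma tstar_sq : tstar^2 = (1 + Real.sqrt 5)/2 := by
  unfold tstar; rw [Real.sq_sqrt]; nlinarith [s5_gt]

lemma tstar_nonneg : 0 ≤ tstar := Real.sqrt_nonneg _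

lemma tstar_gt : 1 < tstar := by
  nlinarith [tstar_sq, s5_gt, tstar_nonneg]

lemma tstar_lt : tstar < 2 := by
  nlinarith [tstar_sq, s5_lt, tstar_nonneg]

lemma tstar_root : tstar^4 - tstar^2 - 1 = 0 := by
  have h := tstar_sq
  have : tstar^4 = ((1 + Real.sqrt 5)/2)^2 := by rw [← h]; ring
  rw [this, h]; nlinarith [s5_sq]

lemma P_pos {x : ℝ} (hx : tstar < x) : 0 < x^4 - x^2 - 1 := by
  have h1 : 1 < tstar := tstar_gt
  have hx2 : tstar^2 < x^2 := by nlinarith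
  have hr := tstar_root
  have h4 : tstar^4 < x^4 := by nlinarith
  nlinarith [tstar_sq, s5_gt]

lemma one_lt_of_tstar {x : ℝ} (hx : tstar < x) : 1 < x := lt_trans tstar_gt hx

/-- comparison of roots lemma -/
lemma root_lt (k : ℕ) (a b : ℝ) (ha : tstar < a) (hb : tstar < b)
    (hga : a^k * (a^4 - a^2 - 1) = a^4 + a^2 - 1)
    (hgb : b^4 + b^2 - 1 < b^k * (b^4 - b^2 - 1)) : a < b := by
  by_contra hc
  push_neg at hc  -- b ≤ a
  have hPa := P_pos ha
  have hPb := P_pos hb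
  have ha1 := one_lt_of_tstar ha
  have hb1 := one_lt_of_tstar hb
  have hpow : b^k ≤ a^k := pow_le_pow_left₀ (by linarith) hc k
  have key : (b^4 + b^2 - 1) * (a^4 - a^2 - 1) < (a^4 + a^2 - 1) * (b^4 - b^2 - 1) := by
    calc (b^4 + b^2 - 1) * (a^4 - a^2 - 1)
        < (b^k * (b^4 - b^2 - 1)) * (a^4 - a^2 - 1) := by
          exact mul_lt_mul_of_pos_right hgb hPa
      _ ≤ (a^k * (b^4 - b^2 - 1)) * (a^4 - a^2 - 1) := by
          have : 0 < (b^4 - b^2 - 1) * (a^4 - a^2 - 1) := mul_pos hPb hPa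
          nlinarith [this, hpow]
      _ = (a^k * (a^4 - a^2 - 1)) * (b^4 - b^2 - 1) := by ring
      _ = (a^4 + a^2 - 1) * (b^4 - b^2 - 1) := by rw [hga]
  have hsq : b*b ≤ a*a := mul_self_le_mul_self (by linarith) hc
  nlinarith [key, mul_nonneg (sub_nonneg.2 hsq) (by positivity : (0:ℝ) ≤ (a*b)^2 + 1)]

lemma exists_root (k : ℕ) (hk : 1 ≤ k) :
    ∃ t : ℝ, tstar < t ∧ t ≤ 2 ∧ t^k * (t^4 - t^2 - 1) = t^4 + t^2 - 1 := by
  set g : ℝ → ℝ := fun t => t^k * (t^4 - t^2 - 1) - (t^4 + t^2 - 1) with hg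
  have hcont : ContinuousOn g (Set.Icc tstar 2) := by
    apply Continuous.continuousOn; unfold g; continuity
  have hgs : g tstar < 0 := by
    simp only [hg]
    rw [tstar_root]
    nlinarith [tstar_sq, s5_gt, sq_nonneg (tstar^2)]
  have hg2 : 0 < g 2 := by
    have : (2:ℝ)^1 ≤ 2^k := pow_le_pow_right₀ (by norm_num) hk
    simp only [hg]
    nlinarith [this]
  have hsub : Set.Icc (g tstar) (g 2) ⊆ g '' (Set.Icc tstar 2) :=
    intermediate_value_Icc (le_of_lt tstar_lt) hcont
  have h0 : (0:ℝ) ∈ Set.Icc (g tstar) (g 2) := ⟨hgs.le, hg2.le⟩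
  obtain ⟨t, ht, hgt⟩ := hsub h0
  simp only [hg] at hgt
  have htstar : tstar < t := by
    rcases lt_or_eq_of_le ht.1 with h | h
    · exact h
    · exfalso
      simp only [hg] at hgs
      rw [← h] at hgt
      linarith
  exact ⟨t, htstar, ht.2, by linarith⟩

lemma Dgraph_adj (m : ℕ) (a b : Fin (m+2)) :
    (Dgraph m).Adj a b ↔ a.val ≠ b.val ∧
      ((a.val+1 = b.val ∧ b.val ≤ m) ∨ (b.val+1 = a.val ∧ a.val ≤ m) ∨
       (a.val = 0 ∧ b.val = m) ∨ (b.val = 0 ∧ a.val = m) ∨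
       (a.val = 0 ∧ b.val = m+1) ∨ (b.val = 0 ∧ a.val = m+1)) := by
  simp only [Dgraph, SimpleGraph.fromRel_adj, ne_eq, Fin.ext_iff]
  tauto

lemma eigen_D (q : ℕ) (t : ℝ) (ht : 1 < t)
    (hrel : t^(q+3) * (t^4 - t^2 - 1) = t^4 + t^2 - 1) :
    (adjMat (Dgraph (q+2))).mulVec
      (fun j : Fin (q+4) => if j.val ≤ q+2 then t*(t^2+1)*(t^j.val + t^(q+3-j.val)) else t^2*(t^(q+3)+1))
      = (t + 1/t) • ((fun j : Fin (q+4) => if j.val ≤ q+2 then t*(t^2+1)*(t^j.val + t^(q+3-j.val)) else t^2*(t^(q+3)+1)) : Fin (q+4) → ℝ) := by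
  have ht0 : (0:ℝ) < t := by linarith
  have ht0' : t ≠ 0 := ne_of_gt ht0
  set v : Fin (q+4) → ℝ := fun j => if j.val ≤ q+2 then t*(t^2+1)*(t^j.val + t^(q+3-j.val)) else t^2*(t^(q+3)+1) with hv
  funext i
  have key : (adjMat (Dgraph (q+2))).mulVec v i
      = ∑ j ∈ Finset.univ.filter (fun j => (Dgraph (q+2)).Adj i j), v j := by
    rw [Finset.sum_filter]
    simp [Matrix.mulVec, dotProduct, adjMat, ite_mul]
  rw [key]
  simp only [Pi.smul_apply, smul_eq_mul]
  by_cases hi0 : i.val = 0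
  · have hfil : Finset.univ.filter (fun j => (Dgraph (q+2)).Adj i j) =
        {(⟨1, by omega⟩ : Fin (q+4)), ⟨q+2, by omega⟩, ⟨q+3, by omega⟩} := by
      ext j
      simp only [Finset.mem_filter, Finset.mem_univ, true_and, Dgraph_adj,
        Finset.mem_insert, Finset.mem_singleton, Fin.ext_iff]
      omega
    rw [hfil, Finset.sum_insert (by simp only [Finset.mem_insert, Finset.mem_singleton, Fin.ext_iff]; omega),
      Finset.sum_insert (by simp only [Finset.mem_singleton, Fin.ext_iff]; omega), Finset.sum_singleton]
    simp only [hv, hi0]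
    rw [if_pos (by omega : (1:ℕ) ≤ q+2), if_pos (by omega : q+2 ≤ q+2),
      if_neg (by omega : ¬ q+3 ≤ q+2), if_pos (by omega : (0:ℕ) ≤ q+2)]
    rw [show q+3-1 = q+2 by omega, show q+3-(q+2) = 1 by omega, show q+3-0 = q+3 by omega]
    field_simp
    linear_combination (-1) * hrel
  · by_cases hip : i.val = q+3
    · have hfil : Finset.univ.filter (fun j => (Dgraph (q+2)).Adj i j) =
          {(⟨0, by omega⟩ : Fin (q+4))} := by
        ext j
        simp only [Finset.mem_filter, Finset.mem_univ, true_and, Dgraph_adj,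
          Finset.mem_singleton, Fin.ext_iff]
        omega
      rw [hfil, Finset.sum_singleton]
      simp only [hv, hip]
      rw [if_pos (by omega : (0:ℕ) ≤ q+2), if_neg (by omega : ¬ q+3 ≤ q+2),
        show q+3-0 = q+3 by omega]
      field_simp
      ring
    · by_cases him : i.val = q+2
      · have hfil : Finset.univ.filter (fun j => (Dgraph (q+2)).Adj i j) =
            {(⟨q+1, by omega⟩ : Fin (q+4)), ⟨0, by omega⟩} := by
          ext j
          simp only [Finset.mem_filter, Finset.mem_univ, true_and, Dgraph_adj,
            Finset.mem_insert, Finset.mem_singleton, Fin.ext_iff]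
          omega
        rw [hfil, Finset.sum_pair (by simp only [ne_eq, Fin.ext_iff]; omega)]
        simp only [hv, him]
        rw [if_pos (by omega : q+1 ≤ q+2), if_pos (by omega : (0:ℕ) ≤ q+2),
          if_pos (by omega : q+2 ≤ q+2),
          show q+3-(q+1) = 2 by omega, show q+3-0 = q+3 by omega, show q+3-(q+2) = 1 by omega]
        field_simp
        ring
      · -- interior: 1 ≤ i.val ≤ q+1
        have hk1 : 1 ≤ i.val := by omega
        have hk2 : i.val ≤ q + 1 := by
          have := i.isLt; omega
        obtain ⟨j, hj⟩ : ∃ j, i.val = j + 1 := ⟨i.val - 1, by omega⟩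
        obtain ⟨l, hl⟩ : ∃ l, q + 2 = i.val + 1 + l := ⟨q + 1 - i.val, by omega⟩
        have hfil : Finset.univ.filter (fun x => (Dgraph (q+2)).Adj i x) =
            {(⟨j, by omega⟩ : Fin (q+4)), ⟨j+2, by omega⟩} := by
          ext x
          simp only [Finset.mem_filter, Finset.mem_univ, true_and, Dgraph_adj,
            Finset.mem_insert, Finset.mem_singleton, Fin.ext_iff]
          omega
        rw [hfil, Finset.sum_pair (by simp only [ne_eq, Fin.ext_iff]; omega)]
        simp only [hv, hj]
        rw [if_pos (by omega : j ≤ q+2), if_pos (by omega : j+2 ≤ q+2),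
          if_pos (by omega : j+1 ≤ q+2),
          show q+3-j = l+3 by omega, show q+3-(j+2) = l+1 by omega,
          show q+3-(j+1) = l+2 by omega]
        field_simp
        ring


lemma specRad_D (q : ℕ) (t : ℝ) (ht : 1 < t)
    (hrel : t^(q+3) * (t^4 - t^2 - 1) = t^4 + t^2 - 1) :
    specRad (Dgraph (q+2)) = t + 1/t := by
  have ht0 : (0:ℝ) < t := by linarith
  apply specRad_eq_of_pos (Dgraph (q+2)) (t+1/t) _ _ (eigen_D q t ht hrel)
  intro i
  split
  · exact mul_pos (mul_pos ht0 (by positivity)) (add_pos (pow_pos ht0 _) (pow_pos ht0 _))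
  · exact mul_pos (pow_pos ht0 2) (add_pos (pow_pos ht0 _) one_pos)

noncomputable def tseq (n : ℕ) : ℝ := Classical.choose (exists_root (n+3) (by omega))

lemma tseq_spec (n : ℕ) : tstar < tseq n ∧ tseq n ≤ 2 ∧
    (tseq n)^(n+3) * ((tseq n)^4 - (tseq n)^2 - 1) = (tseq n)^4 + (tseq n)^2 - 1 :=
  Classical.choose_spec (exists_root (n+3) (by omega))

lemma tseq_gt (n : ℕ) : tstar < tseq n := (tseq_spec n).1
lemma tseq_rel (n : ℕ) :
    (tseq n)^(n+3) * ((tseq n)^4 - (tseq n)^2 - 1) = (tseq n)^4 + (tseq n)^2 - 1 :=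
  (tseq_spec n).2.2

lemma tseq_succ_lt (n : ℕ) : tseq (n+1) < tseq n := by
  set b := tseq n with hb
  have hb1 : 1 < b := one_lt_of_tstar (tseq_gt n)
  have hPb := P_pos (tseq_gt n)
  have hQ : 1 < b^4 + b^2 - 1 := by nlinarith
  apply root_lt (n+4) _ _ (tseq_gt (n+1)) (tseq_gt n)
  · have e : (n+1)+3 = n+4 := by omega
    have := tseq_rel (n+1)
    rwa [e] at this
  · have key : b^(n+4) * (b^4 - b^2 - 1) = b * (b^4 + b^2 - 1) := by
      have e : n + 4 = (n+3) + 1 := by omega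
      rw [e, pow_succ]
      calc b^(n+3) * b * (b^4 - b^2 - 1) = b * (b^(n+3) * (b^4 - b^2 - 1)) := by ring
        _ = b * (b^4 + b^2 - 1) := by rw [tseq_rel n]
    rw [key]
    nlinarith

lemma tseq_tendsto : Filter.Tendsto tseq Filter.atTop (nhds tstar) := by
  rw [Metric.tendsto_atTop]
  intro ε hε
  set u : ℝ := tstar + ε/2 with hu_def
  have hu : tstar < u := by simp only [hu_def]; linarith
  have hu1 : 1 < u := one_lt_of_tstar hu
  have hPu := P_pos hu
  have htends : Filter.Tendsto (fun n : ℕ => u^(n+3)) Filter.atTop Filter.atTop :=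
    (tendsto_pow_atTop_atTop_of_one_lt hu1).comp (Filter.tendsto_add_atTop_nat 3)
  obtain ⟨N, hN⟩ := Filter.eventually_atTop.1
    (htends.eventually_gt_atTop ((u^4 + u^2 - 1)/(u^4 - u^2 - 1)))
  refine ⟨N, fun n hn => ?_⟩
  have h1 := hN n hn
  rw [div_lt_iff₀ hPu] at h1
  have h3 : tseq n < u := root_lt (n+3) _ _ (tseq_gt n) hu (tseq_rel n) (by linarith)
  have h4 := tseq_gt n
  rw [Real.dist_eq, abs_of_pos (by linarith)]
  simp only [hu_def] at h3
  linarith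

lemma tstar_pos : 0 < tstar := lt_trans one_pos tstar_gt

lemma lam_eq : tstar + 1/tstar = lambdaStar := by
  have h0 := tstar_pos
  have hinv : (1/tstar)^2 = (Real.sqrt 5 - 1)/2 := by
    rw [div_pow, one_pow, tstar_sq]
    have hs1 : (1:ℝ) + Real.sqrt 5 ≠ 0 := by nlinarith [s5_gt]
    field_simp
    linear_combination -s5_sq
  have e : (tstar + 1/tstar)^2 = tstar^2 + 2 + (1/tstar)^2 := by
    field_simp
    ring
  have hsq : (tstar + 1/tstar)^2 = 2 + Real.sqrt 5 := by
    rw [e, tstar_sq, hinv]; ring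
  have hpos : 0 ≤ tstar + 1/tstar := by
    have := one_div_pos.2 h0
    linarith
  rw [lambdaStar, ← hsq, Real.sqrt_sq hpos]

lemma lam_succ_lt (n : ℕ) : tseq (n+1) + 1/(tseq (n+1)) < tseq n + 1/(tseq n) := by
  set a := tseq (n+1)
  set b := tseq n
  have ha1 : 1 < a := one_lt_of_tstar (tseq_gt (n+1))
  have hb1 : 1 < b := one_lt_of_tstar (tseq_gt n)
  have hab : a < b := tseq_succ_lt n
  have ha0 : (0:ℝ) < a := by linarith
  have hb0 : (0:ℝ) < b := by linarith
  have e1 : (a + 1/a) * (a*b) = a^2*b + b := by field_simp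
  have e2 : (b + 1/b) * (a*b) = b^2*a + a := by field_simp
  have key : (a + 1/a) * (a*b) < (b + 1/b) * (a*b) := by
    rw [e1, e2]
    nlinarith [mul_pos (sub_pos.2 hab) (show (0:ℝ) < a*b - 1 by nlinarith)]
  exact lt_of_mul_lt_mul_right key (le_of_lt (mul_pos ha0 hb0))

theorem stmt19 :
    StrictAnti (fun n : ℕ => specRad (Dgraph (n + 2))) ∧
    Filter.Tendsto (fun n : ℕ => specRad (Dgraph (n + 2))) Filter.atTop
      (nhds lambdaStar) := by
  have hfun : (fun n : ℕ => specRad (Dgraph (n + 2))) = fun n => tseq n + 1/(tseq n) := by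
    funext n
    exact specRad_D n (tseq n) (one_lt_of_tstar (tseq_gt n)) (tseq_rel n)
  rw [hfun]
  constructor
  · exact strictAnti_nat_of_succ_lt lam_succ_lt
  · rw [← lam_eq]
    have h1 : Filter.Tendsto (fun n => 1/(tseq n)) Filter.atTop (nhds (1/tstar)) := by
      simp only [one_div]
      exact tseq_tendsto.inv₀ (ne_of_gt tstar_pos)
    exact tseq_tendsto.add h1
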